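/- arXiv:1411.7894 — 3 statements merged into one kernel-verified Lean document; each statement's English description precedes it below -/
import Mathlib

section
/- Let 0 < β ≤ γ be real numbers and let f : (0,∞) × ℝ → ℝ be continuously differentiable on the open sector {(r,φ) : 0 < r < 1, 0 < φ < γ}. Define F(ρ,θ) := f(ρ^{γ/β}, γθ/β). Then the Dirichlet energies agree: ∫₀^1 ∫₀^γ ( (∂₁f(r,φ))² + r^{−2}(∂₂f(r,φ))² ) r dφ dr = ∫₀^1 ∫₀^β ( (∂₁F(ρ,θ))² + ρ^{−2}(∂₂F(ρ,θ))² ) ρ dθ dρ (equality of extended-real-valued integrals of the nonnegative integrands). -/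
open Real MeasureTheory Set

theorem aux_lintegral_image {s : Set ℝ} {f f' : ℝ → ℝ}
    (hs : MeasurableSet s) (hf' : ∀ x ∈ s, HasDerivWithinAt f (f' x) s x) (hf : InjOn f s)
    (g : ℝ → ENNReal) : ∫⁻ x in f '' s, g x = ∫⁻ x in s, ENNReal.ofReal |f' x| * g (f x) := by
  simpa only [ContinuousLinearMap.det_toSpanSingleton] using
    lintegral_image_eq_lintegral_abs_det_fderiv_mul volume hs
      (fun x hx => (hf' x hx).hasFDerivWithinAt) hf g

/-- The Dirichlet energy is invariant under the pull-back by
`Ψ_γ (ρ, θ) = (ρ^(γ/β), γθ/β)`, mapping the sector of angle `β` to the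
sector of angle `γ` (`H¹`-isometry): for `f` continuously differentiable on the
open sector of angle `γ` and `F (ρ,θ) = f (ρ^(γ/β), γθ/β)`,
`∫₀¹∫₀^γ ((∂₁f)² + r⁻²(∂₂f)²) r dφ dr = ∫₀¹∫₀^β ((∂₁F)² + ρ⁻²(∂₂F)²) ρ dθ dρ`. -/
theorem sector_H1_isometry (β γ : ℝ) (hβ : 0 < β) (hβγ : β ≤ γ) (f : ℝ → ℝ → ℝ)
    (hf : ContDiffOn ℝ 1 (fun p : ℝ × ℝ => f p.1 p.2)
      {p : ℝ × ℝ | 0 < p.1 ∧ p.1 < 1 ∧ 0 < p.2 ∧ p.2 < γ})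
    (F : ℝ → ℝ → ℝ) (hF : F = fun ρ θ => f (ρ ^ (γ / β)) (γ * θ / β)) :
    ∫⁻ r in Ioo (0:ℝ) 1, ∫⁻ φ in Ioo (0:ℝ) γ,
        ENNReal.ofReal
          (((deriv (fun x => f x φ) r) ^ 2
              + (r ^ 2)⁻¹ * (deriv (fun y => f r y) φ) ^ 2) * r)
      = ∫⁻ ρ in Ioo (0:ℝ) 1, ∫⁻ θ in Ioo (0:ℝ) β,
          ENNReal.ofReal
            (((deriv (fun x => F x θ) ρ) ^ 2
                + (ρ ^ 2)⁻¹ * (deriv (fun y => F ρ y) θ) ^ 2) * ρ) := by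
  subst hF
  beta_reduce
  have hγ : 0 < γ := hβ.trans_le hβγ
  set k := γ / β with hkdef
  have hk : 0 < k := div_pos hγ hβ
  have hkβ : k * β = γ := div_mul_cancel₀ γ hβ.ne'
  set S : Set (ℝ × ℝ) := {p : ℝ × ℝ | 0 < p.1 ∧ p.1 < 1 ∧ 0 < p.2 ∧ p.2 < γ} with hSdef
  set f2 : ℝ × ℝ → ℝ := fun p => f p.1 p.2 with hf2def
  have hSopen : IsOpen S := by
    have hS' : S = Ioo (0:ℝ) 1 ×ˢ Ioo (0:ℝ) γ := by
      ext p
      simp [hSdef, Set.mem_prod, and_assoc]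
    rw [hS']
    exact isOpen_Ioo.prod isOpen_Ioo
  have hdiff : ∀ p ∈ S, DifferentiableAt ℝ f2 p := fun p hp =>
    (hf.differentiableOn one_ne_zero).differentiableAt (hSopen.mem_nhds hp)
  set L : ℝ × ℝ → ℝ × ℝ →L[ℝ] ℝ := fun p => fderiv ℝ f2 p with hLdef
  -- partial derivatives of f
  have hA : ∀ r φ : ℝ, (r, φ) ∈ S → deriv (fun x => f x φ) r = L (r, φ) (1, 0) := by
    intro r φ hp
    have h1 : HasDerivAt (fun x : ℝ => ((x, φ) : ℝ × ℝ)) ((1:ℝ), (0:ℝ)) r :=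
      (hasDerivAt_id r).prodMk (hasDerivAt_const r φ)
    exact (((hdiff _ hp).hasFDerivAt).comp_hasDerivAt r h1).deriv
  have hB : ∀ r φ : ℝ, (r, φ) ∈ S → deriv (fun y => f r y) φ = L (r, φ) (0, 1) := by
    intro r φ hp
    have h1 : HasDerivAt (fun y : ℝ => ((r, y) : ℝ × ℝ)) ((0:ℝ), (1:ℝ)) φ :=
      (hasDerivAt_const φ r).prodMk (hasDerivAt_id φ)
    exact (((hdiff _ hp).hasFDerivAt).comp_hasDerivAt φ h1).deriv
  have hmap : ∀ ρ ∈ Ioo (0:ℝ) 1, ∀ θ ∈ Ioo (0:ℝ) β, ((ρ ^ k, k * θ) : ℝ × ℝ) ∈ S := by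
    rintro ρ ⟨hρ0, hρ1⟩ θ ⟨hθ0, hθβ⟩
    refine ⟨Real.rpow_pos_of_pos hρ0 k, Real.rpow_lt_one hρ0.le hρ1 hk, mul_pos hk hθ0, ?_⟩
    calc k * θ < k * β := by exact mul_lt_mul_of_pos_left hθβ hk
    _ = γ := hkβ
  -- partial derivatives of F
  have hc : ∀ y : ℝ, γ * y / β = k * y := fun y => by rw [hkdef]; ring
  have hFA : ∀ ρ ∈ Ioo (0:ℝ) 1, ∀ θ ∈ Ioo (0:ℝ) β,
      deriv (fun x => f (x ^ k) (γ * θ / β)) ρ = (k * ρ ^ (k - 1)) * L (ρ ^ k, k * θ) (1, 0) := by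
    intro ρ hρ θ hθ
    have h1 : HasDerivAt (fun x : ℝ => ((x ^ k, k * θ) : ℝ × ℝ)) ((k * ρ ^ (k - 1), 0) : ℝ × ℝ) ρ :=
      (Real.hasDerivAt_rpow_const (Or.inl hρ.1.ne')).prodMk (hasDerivAt_const ρ (k * θ))
    have h2 := ((hdiff _ (hmap ρ hρ θ hθ)).hasFDerivAt).comp_hasDerivAt ρ h1
    have h3 : ((k * ρ ^ (k - 1), (0:ℝ)) : ℝ × ℝ) = (k * ρ ^ (k - 1)) • ((1, 0) : ℝ × ℝ) := by
      simp
    rw [hc θ]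
    calc deriv (fun x => f (x ^ k) (k * θ)) ρ = L (ρ ^ k, k * θ) (k * ρ ^ (k - 1), 0) := h2.deriv
    _ = (k * ρ ^ (k - 1)) * L (ρ ^ k, k * θ) (1, 0) := by rw [h3, ContinuousLinearMap.map_smul, smul_eq_mul]
  have hFB : ∀ ρ ∈ Ioo (0:ℝ) 1, ∀ θ ∈ Ioo (0:ℝ) β,
      deriv (fun y => f (ρ ^ k) (γ * y / β)) θ = k * L (ρ ^ k, k * θ) (0, 1) := by
    intro ρ hρ θ hθ
    have hd : HasDerivAt (fun y : ℝ => k * y) k θ := by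
      simpa using (hasDerivAt_id θ).const_mul k
    have h1 : HasDerivAt (fun y : ℝ => ((ρ ^ k, k * y) : ℝ × ℝ)) ((0, k) : ℝ × ℝ) θ :=
      (hasDerivAt_const θ (ρ ^ k)).prodMk hd
    have h2 := ((hdiff _ (hmap ρ hρ θ hθ)).hasFDerivAt).comp_hasDerivAt θ h1
    have h3 : (((0:ℝ), k) : ℝ × ℝ) = k • ((0, 1) : ℝ × ℝ) := by simp
    simp only [hc]
    calc deriv (fun y => f (ρ ^ k) (k * y)) θ = L (ρ ^ k, k * θ) (0, k) := h2.deriv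
    _ = k * L (ρ ^ k, k * θ) (0, 1) := by rw [h3, ContinuousLinearMap.map_smul, smul_eq_mul]
  -- the inner integral as a function of r
  set G : ℝ → ENNReal := fun r => ∫⁻ φ in Ioo (0:ℝ) γ,
      ENNReal.ofReal (((L (r, φ) (1, 0)) ^ 2 + (r ^ 2)⁻¹ * (L (r, φ) (0, 1)) ^ 2) * r)
    with hGdef
  have hLHS : (∫⁻ r in Ioo (0:ℝ) 1, ∫⁻ φ in Ioo (0:ℝ) γ, ENNReal.ofReal
        ((deriv (fun x => f x φ) r ^ 2 + (r ^ 2)⁻¹ * deriv (fun y => f r y) φ ^ 2) * r))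
      = ∫⁻ r in Ioo (0:ℝ) 1, G r := by
    refine setLIntegral_congr_fun_ae measurableSet_Ioo (Filter.Eventually.of_forall ?_)
    intro r hr
    refine setLIntegral_congr_fun_ae measurableSet_Ioo (Filter.Eventually.of_forall ?_)
    intro φ hφ
    have hp : ((r, φ) : ℝ × ℝ) ∈ S := ⟨hr.1, hr.2, hφ.1, hφ.2⟩
    rw [hA _ _ hp, hB _ _ hp]
  have hRHS : (∫⁻ ρ in Ioo (0:ℝ) 1, ∫⁻ θ in Ioo (0:ℝ) β, ENNReal.ofReal
        ((deriv (fun x => f (x ^ k) (γ * θ / β)) ρ ^ 2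
          + (ρ ^ 2)⁻¹ * deriv (fun y => f (ρ ^ k) (γ * y / β)) θ ^ 2) * ρ))
      = ∫⁻ ρ in Ioo (0:ℝ) 1, ∫⁻ θ in Ioo (0:ℝ) β, ENNReal.ofReal
        (((k * ρ ^ (k - 1) * L (ρ ^ k, k * θ) (1, 0)) ^ 2
          + (ρ ^ 2)⁻¹ * (k * L (ρ ^ k, k * θ) (0, 1)) ^ 2) * ρ) := by
    refine setLIntegral_congr_fun_ae measurableSet_Ioo (Filter.Eventually.of_forall ?_)
    intro ρ hρ
    refine setLIntegral_congr_fun_ae measurableSet_Ioo (Filter.Eventually.of_forall ?_)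
    intro θ hθ
    rw [hFA ρ hρ θ hθ, hFB ρ hρ θ hθ]
  -- inner change of variables
  have hdmul : ∀ s : Set ℝ, ∀ θ ∈ s, HasDerivWithinAt (fun y : ℝ => k * y) k s θ := by
    intro s θ _
    exact (by simpa using (hasDerivAt_id θ).const_mul k : HasDerivAt (fun y : ℝ => k * y) k θ).hasDerivWithinAt
  have hinjmul : InjOn (fun y : ℝ => k * y) (Ioo (0:ℝ) β) :=
    fun a _ b _ h => by
      have := mul_left_cancel₀ hk.ne' h
      exact this
  have himg : (fun θ : ℝ => k * θ) '' Ioo (0:ℝ) β = Ioo (0:ℝ) γ := by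
    ext x
    constructor
    · rintro ⟨θ, ⟨h1, h2⟩, rfl⟩
      exact ⟨mul_pos hk h1, by calc k * θ < k * β := mul_lt_mul_of_pos_left h2 hk
                                _ = γ := hkβ⟩
    · rintro ⟨h1, h2⟩
      refine ⟨k⁻¹ * x, ⟨mul_pos (inv_pos.2 hk) h1, ?_⟩, by field_simp⟩
      have hx : x < k * β := hkβ ▸ h2
      calc k⁻¹ * x < k⁻¹ * (k * β) := mul_lt_mul_of_pos_left hx (inv_pos.2 hk)
      _ = β := by field_simp
  have hinner : ∀ ρ : ℝ,
      (∫⁻ θ in Ioo (0:ℝ) β, ENNReal.ofReal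
        (((k * ρ ^ (k - 1) * L (ρ ^ k, k * θ) (1, 0)) ^ 2
          + (ρ ^ 2)⁻¹ * (k * L (ρ ^ k, k * θ) (0, 1)) ^ 2) * ρ))
      = ∫⁻ φ in Ioo (0:ℝ) γ, ENNReal.ofReal k⁻¹ * ENNReal.ofReal
        (((k * ρ ^ (k - 1) * L (ρ ^ k, φ) (1, 0)) ^ 2
          + (ρ ^ 2)⁻¹ * (k * L (ρ ^ k, φ) (0, 1)) ^ 2) * ρ) := by
    intro ρ
    rw [← himg, aux_lintegral_image measurableSet_Ioo (hdmul _) hinjmul]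
    refine lintegral_congr fun θ => ?_
    rw [← mul_assoc, ← ENNReal.ofReal_mul (abs_nonneg k), abs_of_pos hk,
      mul_inv_cancel₀ hk.ne', ENNReal.ofReal_one, one_mul]
  -- outer change of variables
  have himg2 : (fun ρ : ℝ => ρ ^ k) '' Ioo (0:ℝ) 1 = Ioo (0:ℝ) 1 := by
    ext r
    constructor
    · rintro ⟨ρ, ⟨h0, h1⟩, rfl⟩
      exact ⟨Real.rpow_pos_of_pos h0 k, Real.rpow_lt_one h0.le h1 hk⟩
    · rintro ⟨h0, h1⟩
      refine ⟨r ^ k⁻¹, ⟨Real.rpow_pos_of_pos h0 _, Real.rpow_lt_one h0.le h1 (inv_pos.2 hk)⟩, ?_⟩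
      show (r ^ k⁻¹) ^ k = r
      rw [← Real.rpow_mul h0.le, inv_mul_cancel₀ hk.ne', Real.rpow_one]
  have hinj2 : InjOn (fun ρ : ℝ => ρ ^ k) (Ioo (0:ℝ) 1) :=
    (Real.rpow_left_injOn hk.ne').mono fun x hx => le_of_lt hx.1
  have hd2 : ∀ ρ ∈ Ioo (0:ℝ) 1, HasDerivWithinAt (fun ρ : ℝ => ρ ^ k)
      (k * ρ ^ (k - 1)) (Ioo (0:ℝ) 1) ρ :=
    fun ρ hρ => (Real.hasDerivAt_rpow_const (Or.inl hρ.1.ne')).hasDerivWithinAt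
  have houter : (∫⁻ r in Ioo (0:ℝ) 1, G r)
      = ∫⁻ ρ in Ioo (0:ℝ) 1, ENNReal.ofReal |k * ρ ^ (k - 1)| * G (ρ ^ k) := by
    conv_lhs => rw [← himg2]
    exact aux_lintegral_image measurableSet_Ioo hd2 hinj2 G
  rw [hLHS, hRHS, houter]
  refine setLIntegral_congr_fun_ae measurableSet_Ioo (Filter.Eventually.of_forall ?_)
  intro ρ hρ
  rw [hinner ρ]
  have h0 : (0:ℝ) < ρ := hρ.1
  have hc1 : 0 ≤ k * ρ ^ (k - 1) := mul_nonneg hk.le (Real.rpow_nonneg h0.le _)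
  simp only [hGdef]
  rw [← lintegral_const_mul' _ _ ENNReal.ofReal_ne_top]
  refine lintegral_congr fun φ => ?_
  rw [abs_of_nonneg hc1, ← ENNReal.ofReal_mul hc1,
    ← ENNReal.ofReal_mul (inv_nonneg.2 hk.le)]
  congr 1
  have hρk : ρ ^ (k - 1) = ρ ^ k / ρ := by rw [Real.rpow_sub h0, Real.rpow_one]
  have hu : (0:ℝ) < ρ ^ k := Real.rpow_pos_of_pos h0 k
  rw [hρk]
  generalize ρ ^ k = u at hu ⊢
  field_simp
end

section
/- Fix α ∈ (0,π) and for γ > 0 define σ_γ(ρ) := log(γ/α) + (γ/α − 1) log ρ for ρ > 0. Write Δu(ρ,θ) := −( ∂₁²u(ρ,θ) + ρ^{−1}∂₁u(ρ,θ) + ρ^{−2}∂₂²u(ρ,θ) ) for the (positive) Euclidean Laplacian in polar coordinates. Then for every function f : (0,∞) × ℝ → ℝ that is three times continuously differentiable and every point (ρ,θ) with ρ > 0, the function γ ↦ e^{−σ_γ(ρ)} · ( Δ( (ρ',θ') ↦ e^{−σ_γ(ρ')} f(ρ',θ') ) )(ρ,θ) is differentiable at γ = α, with derivative equal to −(2/α)(1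 + log ρ) · Δf(ρ,θ) + (2/α) ρ^{−1} ∂₁f(ρ,θ). -/
open Real Set

/-- The positive Euclidean Laplacian in polar coordinates:
`Δu(ρ,θ) = −(∂₁²u + ρ⁻¹ ∂₁u + ρ⁻² ∂₂²u)`. -/
noncomputable def lapPolar (u : ℝ → ℝ → ℝ) (ρ θ : ℝ) : ℝ :=
  -(deriv (fun x => deriv (fun x' => u x' θ) x) ρ
      + ρ⁻¹ * deriv (fun x => u x θ) ρ
      + (ρ ^ 2)⁻¹ * deriv (fun y => deriv (fun y' => u ρ y') y) θ)

private lemma hasDerivAt_expSigma (b c x : ℝ) (hx : 0 < x) :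
    HasDerivAt (fun t => Real.exp (-(c + b * Real.log t)))
      (-(b * x⁻¹) * Real.exp (-(c + b * Real.log x))) x := by
  have h : HasDerivAt (fun t => -(c + b * Real.log t)) (-(b * x⁻¹)) x := by
    have := (((Real.hasDerivAt_log hx.ne').const_mul b).const_add c).neg
    exact this
  simpa [mul_comm] using h.exp

private lemma lap_conj (f : ℝ → ℝ → ℝ)
    (hf : ContDiffOn ℝ 3 (fun p : ℝ × ℝ => f p.1 p.2) (Ioi (0:ℝ) ×ˢ (univ : Set ℝ)))
    (b c ρ θ : ℝ) (hρ : 0 < ρ) :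
    lapPolar (fun x y => Real.exp (-(c + b * Real.log x)) * f x y) ρ θ
      = Real.exp (-(c + b * Real.log ρ)) *
        (lapPolar f ρ θ + 2 * b * ρ⁻¹ * deriv (fun x => f x θ) ρ
          - b ^ 2 * (ρ ^ 2)⁻¹ * f ρ θ) := by
  set g : ℝ → ℝ := fun t => Real.exp (-(c + b * Real.log t)) with hg_def
  set φ : ℝ → ℝ := fun x => f x θ with hφ_def
  have hφ3 : ContDiffOn ℝ 3 φ (Ioi (0:ℝ)) :=
    hf.comp ((contDiff_id.prodMk contDiff_const).contDiffOn)
      (fun x hx => ⟨hx, trivial⟩)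
  have hφd : ∀ x ∈ Ioi (0:ℝ), DifferentiableAt ℝ φ x := fun x hx =>
    ((hφ3.differentiableOn (by norm_num)).differentiableAt (isOpen_Ioi.mem_nhds hx))
  have hφ'd : DifferentiableAt ℝ (deriv φ) ρ :=
    (((hφ3.deriv_of_isOpen (m := 2) isOpen_Ioi (by norm_num)).differentiableOn
      (by norm_num)).differentiableAt (isOpen_Ioi.mem_nhds hρ))
  have hd1 : ∀ x ∈ Ioi (0:ℝ),
      deriv (fun x' => g x' * f x' θ) x
        = -(b * x⁻¹) * g x * φ x + g x * deriv φ x := by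
    intro x hx
    have := ((hasDerivAt_expSigma b c x hx).mul ((hφd x hx).hasDerivAt)).deriv
    exact this
  -- θ-term
  have hθ : deriv (fun y => deriv (fun y' => g ρ * f ρ y') y) θ
      = g ρ * deriv (fun y => deriv (fun y' => f ρ y') y) θ := by
    have h1 : (fun y => deriv (fun y' => g ρ * f ρ y') y)
        = fun y => g ρ * deriv (fun y' => f ρ y') y := by
      funext y; exact deriv_const_mul_field _
    rw [h1, deriv_const_mul_field]
  -- first ρ derivative
  have hρ1 : deriv (fun x => g x * f x θ) ρ
      = -(b * ρ⁻¹) * g ρ * φ ρ + g ρ * deriv φ ρ := hd1 ρ hρ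
  -- second ρ derivative
  have hInv : HasDerivAt (fun x : ℝ => -(b * x⁻¹)) (b * (ρ ^ 2)⁻¹) ρ := by
    have := (((hasDerivAt_inv hρ.ne').const_mul b).neg)
    exact this.congr_deriv (by ring)
  have hg' := hasDerivAt_expSigma b c ρ hρ
  have hφρ := (hφd ρ hρ).hasDerivAt
  have hφ'ρ := hφ'd.hasDerivAt
  have htot := ((hInv.mul hg').mul hφρ).add (hg'.mul hφ'ρ)
  have hev : (fun x => deriv (fun x' => g x' * f x' θ) x)
      =ᶠ[nhds ρ] (fun x => -(b * x⁻¹) * g x * φ x + g x * deriv φ x) :=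
    Filter.eventuallyEq_of_mem (isOpen_Ioi.mem_nhds hρ) hd1
  have hρ2 : deriv (fun x => deriv (fun x' => g x' * f x' θ) x) ρ
      = (b * (ρ ^ 2)⁻¹ * g ρ + -(b * ρ⁻¹) * (-(b * ρ⁻¹) * g ρ)) * φ ρ
          + -(b * ρ⁻¹) * g ρ * deriv φ ρ
          + (-(b * ρ⁻¹) * g ρ * deriv φ ρ + g ρ * deriv (deriv φ) ρ) := by
    rw [hev.deriv_eq]
    exact htot.deriv
  have hρ0 : ρ ≠ 0 := hρ.ne'
  simp only [lapPolar, ← hφ_def]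
  rw [hθ, hρ1, hρ2]
  have : f ρ θ = φ ρ := rfl
  rw [this]
  simp only [hg_def]
  field_simp
  ring

/-- With `σ_γ(ρ) = log(γ/α) + (γ/α − 1) log ρ`, for every `C³` function
`f` on `(0,∞) × ℝ` and every point `(ρ,θ)` with `ρ > 0`, the map
`γ ↦ e^{−σ_γ(ρ)} Δ(e^{−σ_γ} f)(ρ,θ)` is differentiable at `γ = α` with derivative
`−(2/α)(1 + log ρ) Δf(ρ,θ) + (2/α) ρ⁻¹ ∂₁f(ρ,θ)`. -/
theorem deriv_conjugated_laplacian (α : ℝ) (hα : α ∈ Ioo 0 π) (f : ℝ → ℝ → ℝ)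
    (hf : ContDiffOn ℝ 3 (fun p : ℝ × ℝ => f p.1 p.2) (Ioi (0:ℝ) ×ˢ (univ : Set ℝ)))
    (ρ θ : ℝ) (hρ : 0 < ρ) :
    HasDerivAt
      (fun γ : ℝ =>
        Real.exp (-(Real.log (γ / α) + (γ / α - 1) * Real.log ρ)) *
          lapPolar
            (fun ρ' θ' =>
              Real.exp (-(Real.log (γ / α) + (γ / α - 1) * Real.log ρ')) * f ρ' θ')
            ρ θ)
      (-(2 / α) * (1 + Real.log ρ) * lapPolar f ρ θ
        + (2 / α) * ρ⁻¹ * deriv (fun x => f x θ) ρ)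
      α := by
  obtain ⟨hα0, -⟩ := hα
  have hαne : α ≠ 0 := hα0.ne'
  have hc : HasDerivAt (fun γ : ℝ => γ / α) (1 / α) α := by
    simpa using (hasDerivAt_id α).div_const α
  have hlog : HasDerivAt (fun γ : ℝ => Real.log (γ / α)) ((α / α)⁻¹ * (1 / α)) α :=
    (Real.hasDerivAt_log (by positivity)).comp α hc
  have h1 : HasDerivAt (fun γ : ℝ => γ / α - 1) (1 / α) α := hc.sub_const 1
  have hu : HasDerivAt
      (fun γ : ℝ => -2 * (Real.log (γ / α) + (γ / α - 1) * Real.log ρ))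
      (-2 * ((α / α)⁻¹ * (1 / α) + 1 / α * Real.log ρ)) α :=
    ((hlog.add (h1.mul_const _)).const_mul (-2))
  have hP := ((hasDerivAt_const α (lapPolar f ρ θ)).add
      (((h1.const_mul 2).mul_const ρ⁻¹).mul_const (deriv (fun x => f x θ) ρ))).sub
      (((h1.pow 2).mul_const ((ρ ^ 2)⁻¹)).mul_const (f ρ θ))
  have hF := hu.exp.mul hP
  have hEq : (fun γ : ℝ =>
        Real.exp (-(Real.log (γ / α) + (γ / α - 1) * Real.log ρ)) *
          lapPolar (fun ρ' θ' =>
              Real.exp (-(Real.log (γ / α) + (γ / α - 1) * Real.log ρ')) * f ρ' θ') ρ θ)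
      =ᶠ[nhds α] (fun γ : ℝ =>
        Real.exp (-2 * (Real.log (γ / α) + (γ / α - 1) * Real.log ρ)) *
          (lapPolar f ρ θ + 2 * (γ / α - 1) * ρ⁻¹ * deriv (fun x => f x θ) ρ
            - (γ / α - 1) ^ 2 * (ρ ^ 2)⁻¹ * f ρ θ)) := by
    filter_upwards [isOpen_Ioi.mem_nhds hα0] with γ hγ
    rw [lap_conj f hf (γ / α - 1) (Real.log (γ / α)) ρ θ hρ, ← mul_assoc, ← Real.exp_add]
    ring_nf
  refine HasDerivAt.congr_of_eventuallyEq ?_ hEq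
  refine hF.congr_deriv ?_
  simp only [div_self hαne, Real.log_one, sub_self, zero_mul, mul_zero, add_zero,
    zero_add, mul_one, Real.exp_zero, one_mul, zero_pow, pow_one, sub_zero,
    Pi.add_apply, Pi.sub_apply, Pi.pow_apply]
  ring
end

section
/- Let I₀(u) := (1/π) ∫₀^π e^{u cos φ} dφ and I₁(u) := (1/π) ∫₀^π e^{u cos φ} cos φ dφ, and define g(u) := e^{−u} u (I₀(u) + I₁(u)). Then for every X > 0, ∫₀^X (log u) e^{−u} I₀(u) du = (log X) · g(X) − 2 g(X) − e^{−X} I₀(X) + 1. -/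
open Real

/-- The modified Bessel function of the first kind of order zero,
`I₀(u) = (1/π) ∫₀^π e^{u cos φ} dφ`. -/
noncomputable def besselI0 (u : ℝ) : ℝ := (1 / π) * ∫ φ in (0:ℝ)..π, Real.exp (u * Real.cos φ)

/-- The modified Bessel function of the first kind of order one,
`I₁(u) = (1/π) ∫₀^π e^{u cos φ} cos φ dφ`. -/
noncomputable def besselI1 (u : ℝ) : ℝ :=
  (1 / π) * ∫ φ in (0:ℝ)..π, Real.exp (u * Real.cos φ) * Real.cos φ

/-- `g(u) = e^{−u} u (I₀(u) + I₁(u))`. -/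
noncomputable def gBessel (u : ℝ) : ℝ := Real.exp (-u) * u * (besselI0 u + besselI1 u)


section BesselAux
open MeasureTheory intervalIntegral Set Filter

lemma hasDerivAt_kernel (h : ℝ → ℝ) (hc : Continuous h) (hb : ∀ φ, |h φ| ≤ 1) (u : ℝ) :
    HasDerivAt (fun v => ∫ φ in (0:ℝ)..π, Real.exp (v * Real.cos φ) * h φ)
      (∫ φ in (0:ℝ)..π, Real.exp (u * Real.cos φ) * Real.cos φ * h φ) u := by
  have hder : ∀ t : ℝ, ∀ x : ℝ, HasDerivAt (fun x => Real.exp (x * Real.cos t) * h t)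
      (Real.exp (x * Real.cos t) * Real.cos t * h t) x := by
    intro t x
    have := (((hasDerivAt_id x).mul_const (Real.cos t)).exp).mul_const (h t)
    simpa [one_mul, mul_comm, mul_assoc, mul_left_comm] using this
  have main := intervalIntegral.hasDerivAt_integral_of_dominated_loc_of_deriv_le
    (F := fun x t => Real.exp (x * Real.cos t) * h t)
    (F' := fun x t => Real.exp (x * Real.cos t) * Real.cos t * h t)
    (x₀ := u) (a := 0) (b := π) (bound := fun _ => Real.exp (|u| + 1))
    (s := Metric.ball u 1) (Metric.ball_mem_nhds u one_pos)
    (Filter.Eventually.of_forall fun x =>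
      (Continuous.aestronglyMeasurable (by fun_prop)))
    (Continuous.intervalIntegrable (by fun_prop) _ _)
    (Continuous.aestronglyMeasurable (by fun_prop))
    (ae_of_all _ ?_)
    (intervalIntegrable_const (μ := volume))
    (ae_of_all _ fun t _ x _ => hder t x)
  · exact main.2
  · intro t _ x hx
    have hx' : |x| ≤ |u| + 1 := by
      have := abs_sub_abs_le_abs_sub x u
      have h2 : |x - u| < 1 := by simpa [Metric.mem_ball, Real.dist_eq] using hx
      linarith
    have h1 : x * Real.cos t ≤ |u| + 1 := by
      calc x * Real.cos t ≤ |x * Real.cos t| := le_abs_self _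
        _ = |x| * |Real.cos t| := abs_mul _ _
        _ ≤ (|u| + 1) * 1 := by
            apply mul_le_mul hx' (Real.abs_cos_le_one t) (abs_nonneg _) (by positivity)
        _ = |u| + 1 := mul_one _
    have := Real.exp_le_exp.2 h1
    calc ‖Real.exp (x * Real.cos t) * Real.cos t * h t‖
        = Real.exp (x * Real.cos t) * |Real.cos t| * |h t| := by
          simp [abs_mul, Real.abs_exp]
      _ ≤ Real.exp (|u| + 1) * 1 * 1 := by
          gcongr
          · exact Real.abs_cos_le_one t
          · exact hb t
      _ = Real.exp (|u| + 1) := by ring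

noncomputable def besselI2 (u : ℝ) : ℝ :=
  (1 / π) * ∫ φ in (0:ℝ)..π, Real.exp (u * Real.cos φ) * Real.cos φ * Real.cos φ

lemma hasDerivAt_besselI0 (u : ℝ) : HasDerivAt besselI0 (besselI1 u) u := by
  have := (hasDerivAt_kernel (fun _ => 1) continuous_const (fun _ => by norm_num) u).const_mul
    (1 / π)
  simp only [mul_one] at this
  exact this

lemma hasDerivAt_besselI1 (u : ℝ) : HasDerivAt besselI1 (besselI2 u) u := by
  have := (hasDerivAt_kernel Real.cos Real.continuous_cos (fun φ => Real.abs_cos_le_one φ)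
    u).const_mul (1 / π)
  exact this

lemma besselI1_eq (u : ℝ) : besselI1 u = u * besselI0 u - u * besselI2 u := by
  have hzero : ∫ φ in (0:ℝ)..π,
      Real.exp (u * Real.cos φ) * (Real.cos φ - u * (Real.sin φ * Real.sin φ)) = 0 := by
    have hft : ∀ φ ∈ Set.uIcc (0:ℝ) π,
        HasDerivAt (fun φ => Real.exp (u * Real.cos φ) * Real.sin φ)
          (Real.exp (u * Real.cos φ) * (Real.cos φ - u * (Real.sin φ * Real.sin φ))) φ := by
      intro φ _
      have h1 : HasDerivAt (fun φ => Real.exp (u * Real.cos φ))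
          (Real.exp (u * Real.cos φ) * (u * (-Real.sin φ))) φ :=
        (((Real.hasDerivAt_cos φ).const_mul u).exp)
      have := h1.mul (Real.hasDerivAt_sin φ)
      refine this.congr_deriv ?_
      ring
    have := intervalIntegral.integral_eq_sub_of_hasDerivAt hft
      (Continuous.intervalIntegrable (by fun_prop) _ _)
    simpa using this
  have hsplit : ∫ φ in (0:ℝ)..π,
      Real.exp (u * Real.cos φ) * (Real.cos φ - u * (Real.sin φ * Real.sin φ))
      = (∫ φ in (0:ℝ)..π, Real.exp (u * Real.cos φ) * Real.cos φ)
        - u * ((∫ φ in (0:ℝ)..π, Real.exp (u * Real.cos φ))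
          - ∫ φ in (0:ℝ)..π, Real.exp (u * Real.cos φ) * Real.cos φ * Real.cos φ) := by
    rw [← intervalIntegral.integral_sub, ← intervalIntegral.integral_const_mul,
      ← intervalIntegral.integral_sub]
    · apply intervalIntegral.integral_congr
      intro φ _
      have hs : Real.sin φ * Real.sin φ = 1 - Real.cos φ * Real.cos φ := by
        have := Real.sin_sq_add_cos_sq φ
        nlinarith
      simp only [hs]
      ring
    all_goals apply Continuous.intervalIntegrable; fun_prop
  rw [hsplit] at hzero
  simp only [besselI0, besselI1, besselI2]
  have hπ : π ≠ 0 := Real.pi_ne_zero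
  have hA := hzero
  rw [sub_eq_zero] at hA
  rw [hA]
  ring



lemma hasDerivAt_gBessel (u : ℝ) :
    HasDerivAt gBessel (Real.exp (-u) * besselI0 u) u := by
  have he : HasDerivAt (fun u : ℝ => Real.exp (-u)) (-Real.exp (-u)) u := by
    simpa using ((hasDerivAt_id u).neg.exp)
  have h := (he.mul (hasDerivAt_id u)).mul
    ((hasDerivAt_besselI0 u).add (hasDerivAt_besselI1 u))
  have key := besselI1_eq u
  refine h.congr_deriv ?_
  simp only [Pi.mul_apply, Pi.add_apply, id_eq]
  linear_combination (Real.exp (-u)) * key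

lemma besselI0_zero : besselI0 0 = 1 := by
  simp [besselI0, Real.pi_ne_zero]

lemma continuous_besselI0 : Continuous besselI0 :=
  continuous_iff_continuousAt.2 fun u => (hasDerivAt_besselI0 u).continuousAt

lemma continuous_besselI1 : Continuous besselI1 :=
  continuous_iff_continuousAt.2 fun u => (hasDerivAt_besselI1 u).continuousAt

lemma continuous_gBessel : Continuous gBessel := by
  unfold gBessel
  exact ((Real.continuous_exp.comp continuous_neg).mul continuous_id).mul (continuous_besselI0.add continuous_besselI1)

-- integrability of log on [0, X]
lemma intervalIntegrable_log_zero (X : ℝ) (hX : 0 < X) :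
    IntervalIntegrable Real.log volume 0 X := by
  rw [intervalIntegrable_iff, Set.uIoc_of_le hX.le]
  apply MeasureTheory.Integrable.mono'
    (g := fun x : ℝ => 2 * x ^ (-(1/2) : ℝ) + |Real.log X|)
  · apply MeasureTheory.Integrable.add
    · have h := intervalIntegral.intervalIntegrable_rpow' (a := 0) (b := X)
        (r := -(1/2)) (by norm_num)
      rw [intervalIntegrable_iff, Set.uIoc_of_le hX.le] at h
      exact h.const_mul 2
    · exact integrable_const _
  · exact Real.measurable_log.aestronglyMeasurable
  · rw [ae_restrict_iff' measurableSet_Ioc]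
    apply ae_of_all
    intro x hx
    have hx0 : 0 < x := hx.1
    have hb : -Real.log x ≤ 2 * x ^ (-(1/2) : ℝ) := by
      have h1 : Real.log (x ^ (-(1/2) : ℝ)) = -(1/2) * Real.log x := Real.log_rpow hx0 _
      have h2 : Real.log (x ^ (-(1/2) : ℝ)) ≤ x ^ (-(1/2) : ℝ) :=
        (Real.log_le_sub_one_of_pos (Real.rpow_pos_of_pos hx0 _)).trans (by linarith)
      linarith
    have hpos : (0:ℝ) ≤ 2 * x ^ (-(1/2) : ℝ) := by positivity
    rw [Real.norm_eq_abs, abs_le]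
    constructor
    · linarith [abs_nonneg (Real.log X)]
    · rcases le_or_gt x 1 with h1 | h1
      · have : Real.log x ≤ 0 := Real.log_nonpos hx0.le h1
        linarith [abs_nonneg (Real.log X)]
      · have : Real.log x ≤ Real.log X := Real.log_le_log hx0 hx.2
        linarith [le_abs_self (Real.log X)]

/-- For every `X > 0`,
`∫₀^X (log u) e^{−u} I₀(u) du = (log X) g(X) − 2 g(X) − e^{−X} I₀(X) + 1`. -/
theorem integral_log_exp_besselI0 (X : ℝ) (hX : 0 < X) :
    ∫ u in (0:ℝ)..X, Real.log u * (Real.exp (-u) * besselI0 u)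
      = Real.log X * gBessel X - 2 * gBessel X - Real.exp (-X) * besselI0 X + 1 := by
  set H : ℝ → ℝ := fun u =>
    Real.log u * gBessel u - 2 * gBessel u - Real.exp (-u) * besselI0 u with hH
  have he : ∀ u : ℝ, HasDerivAt (fun u : ℝ => Real.exp (-u)) (-Real.exp (-u)) u := by
    intro u; simpa using ((hasDerivAt_id u).neg.exp)
  have hderiv : ∀ u ∈ Set.Ioo (0:ℝ) X,
      HasDerivAt H (Real.log u * (Real.exp (-u) * besselI0 u)) u := by
    intro u hu
    have hu0 : (0:ℝ) < u := hu.1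
    have h1 := (Real.hasDerivAt_log hu0.ne').mul (hasDerivAt_gBessel u)
    have h2 := (hasDerivAt_gBessel u).const_mul (2:ℝ)
    have h3 := (he u).mul (hasDerivAt_besselI0 u)
    have h := (h1.sub h2).sub h3
    refine h.congr_deriv ?_
    have hg : u⁻¹ * gBessel u = Real.exp (-u) * (besselI0 u + besselI1 u) := by
      simp only [gBessel]
      field_simp
    rw [hg]
    ring
  have hcont : ContinuousOn H (Set.Icc 0 X) := by
    intro x hx
    rcases eq_or_lt_of_le hx.1 with h0 | h0
    · -- continuity at 0 within the interval
      have H0 : H 0 = -1 := by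
        simp [hH, gBessel, besselI0_zero]
      have hIci : ContinuousWithinAt H (Set.Ici 0) 0 := by
        rw [← continuousWithinAt_Ioi_iff_Ici]
        rw [ContinuousWithinAt, H0]
        have t1 : Tendsto (fun u : ℝ => Real.log u * u) (nhdsWithin 0 (Set.Ioi 0)) (nhds 0) := by
          have := tendsto_log_mul_rpow_nhdsGT_zero (r := 1) one_pos
          simpa using this
        have t2 : Tendsto (fun u : ℝ => Real.exp (-u) * (besselI0 u + besselI1 u))
            (nhdsWithin 0 (Set.Ioi 0))
            (nhds (Real.exp (-0) * (besselI0 0 + besselI1 0))) :=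
          (((Real.continuous_exp.comp continuous_neg).mul
            (continuous_besselI0.add continuous_besselI1)).tendsto 0).mono_left
            nhdsWithin_le_nhds
        have t3 : Tendsto (fun u : ℝ => 2 * gBessel u) (nhdsWithin 0 (Set.Ioi 0))
            (nhds (2 * gBessel 0)) :=
          ((continuous_gBessel.tendsto 0).const_mul 2).mono_left nhdsWithin_le_nhds
        have t4 : Tendsto (fun u : ℝ => Real.exp (-u) * besselI0 u) (nhdsWithin 0 (Set.Ioi 0))
            (nhds (Real.exp (-0) * besselI0 0)) :=
          (((Real.continuous_exp.comp continuous_neg).mul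
            continuous_besselI0).tendsto 0).mono_left nhdsWithin_le_nhds
        have tall := ((t1.mul t2).sub t3).sub t4
        have hval : (0:ℝ) * (Real.exp (-0) * (besselI0 0 + besselI1 0)) - 2 * gBessel 0
            - Real.exp (-0) * besselI0 0 = -1 := by
          simp [gBessel, besselI0_zero]
        rw [hval] at tall
        apply tall.congr
        intro u
        simp only [hH, gBessel]
        ring
      rw [← h0]
      exact hIci.mono Set.Icc_subset_Ici_self
    · have : ContinuousAt H x := by
        apply ContinuousAt.sub
        apply ContinuousAt.sub
        · exact ((Real.continuousAt_log h0.ne').mul continuous_gBessel.continuousAt)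
        · exact (continuous_gBessel.continuousAt.const_smul (2:ℝ)).congr (Filter.EventuallyEq.of_eq rfl)
        · exact ((Real.continuous_exp.comp continuous_neg).continuousAt.mul
            continuous_besselI0.continuousAt)
      exact this.continuousWithinAt
  have hint : IntervalIntegrable (fun u => Real.log u * (Real.exp (-u) * besselI0 u))
      volume 0 X :=
    (intervalIntegrable_log_zero X hX).mul_continuousOn
      (((Real.continuous_exp.comp continuous_neg).mul continuous_besselI0).continuousOn)
  have := intervalIntegral.integral_eq_sub_of_hasDeriv_right_of_le hX.le hcont
    (fun x hx => (hderiv x hx).hasDerivWithinAt) hint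
  rw [this]
  have H0 : H 0 = -1 := by simp [hH, gBessel, besselI0_zero]
  rw [H0, hH]
  ring

end BesselAux
end
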